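/- For any integer n ≥ 2, with s_k defined as the constant value of the 2k-cycle sum (s_1 = -1), one has Σ_{k=2}^n C(2n-1, 2k-1) s_k = 2n - 2. -/

import Mathlib

/-- The formal power series of `sin` over `ℚ`. -/
noncomputable def formalSin : PowerSeries ℚ :=
  PowerSeries.mk fun n => if n % 2 = 1 then (-1 : ℚ) ^ (n / 2) / n.factorial else 0

/-- The formal power series of `cos` over `ℚ`. -/
noncomputable def formalCos : PowerSeries ℚ :=
  PowerSeries.mk fun n => if n % 2 = 0 then (-1 : ℚ) ^ (n / 2) / n.factorial else 0

/-- The formal power series of `tan` over `ℚ`. -/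
noncomputable def formalTan : PowerSeries ℚ := formalSin * formalCos⁻¹

/-- The `n`-th tangent number `T_n`, defined by
`tan x = ∑_{n ≥ 1} T_n x^{2n-1}/(2n-1)!`. -/
noncomputable def tangentNumber (n : ℕ) : ℚ :=
  (2 * n - 1).factorial * PowerSeries.coeff (R := ℚ) (2 * n - 1) formalTan

open Finset

open PowerSeries in
lemma constCoeff_cos' : PowerSeries.constantCoeff (R := ℚ) formalCos = 1 := by
  rw [← PowerSeries.coeff_zero_eq_constantCoeff]
  simp [formalCos]

lemma cos_mul_tan' : formalCos * formalTan = formalSin := by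
  rw [formalTan, mul_comm formalSin, ← mul_assoc,
    PowerSeries.mul_inv_cancel _ (by rw [constCoeff_cos']; norm_num), one_mul]

lemma coeff_cos_even' (m : ℕ) :
    PowerSeries.coeff (R := ℚ) (2 * m) formalCos = (-1) ^ m / (2 * m).factorial := by
  simp [formalCos, Nat.mul_mod_right, Nat.mul_div_cancel_left]

lemma coeff_tan_odd' (k : ℕ) :
    PowerSeries.coeff (R := ℚ) (2 * k - 1) formalTan = tangentNumber k / (2 * k - 1).factorial := by
  rw [tangentNumber]
  field_simp

lemma key_tangent_sum (n : ℕ) (hn : 1 ≤ n) :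
    ∑ k ∈ Icc 1 n, (Nat.choose (2*n-1) (2*k-1) : ℚ) * ((-1)^k * tangentNumber k) = -1 := by
  have hsin : PowerSeries.coeff (R := ℚ) (2*n-1) formalSin =
      ∑ p ∈ Finset.HasAntidiagonal.antidiagonal (2*n-1),
        PowerSeries.coeff (R := ℚ) p.1 formalCos * PowerSeries.coeff (R := ℚ) p.2 formalTan := by
    rw [← cos_mul_tan', PowerSeries.coeff_mul]
  have hsinval : PowerSeries.coeff (R := ℚ) (2*n-1) formalSin = (-1)^(n-1) / (2*n-1).factorial := by
    have h1 : (2*n-1) % 2 = 1 := by omega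
    have h2 : (2*n-1) / 2 = n - 1 := by omega
    simp [formalSin, h1, h2]
  set f : ℕ × ℕ → ℚ := fun p => PowerSeries.coeff (R := ℚ) p.1 formalCos * PowerSeries.coeff (R := ℚ) p.2 formalTan with hf
  have h2 : ∑ p ∈ Finset.HasAntidiagonal.antidiagonal (2*n-1), f p
      = ∑ k ∈ Icc 1 n, f (2*(n-k), 2*k-1) := by
    have himg : ∑ p ∈ (Icc 1 n).image (fun k => ((2*(n-k), 2*k-1) : ℕ × ℕ)), f p
        = ∑ k ∈ Icc 1 n, f (2*(n-k), 2*k-1) :=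
      Finset.sum_image (by intro x hx y hy h; simp only [Prod.mk.injEq] at h; omega)
    rw [← himg]
    apply (Finset.sum_subset ?_ ?_).symm
    · intro p hp
      simp only [Finset.mem_image, Finset.mem_Icc] at hp
      obtain ⟨k, hk, rfl⟩ := hp
      simp only [Finset.HasAntidiagonal.mem_antidiagonal]
      omega
    · intro p hp hps
      rcases Nat.even_or_odd p.1 with he | ho
      · exfalso
        apply hps
        simp only [Finset.HasAntidiagonal.mem_antidiagonal] at hp
        simp only [Finset.mem_image, Finset.mem_Icc]
        obtain ⟨m, hm⟩ := he
        refine ⟨n - m, by omega, ?_⟩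
        rw [Prod.ext_iff]
        constructor
        · simp; omega
        · simp; omega
      · have hm : p.1 % 2 = 1 := Nat.odd_iff.mp ho
        simp [hf, formalCos, hm]
  have h3 : ∀ k ∈ Icc 1 n, (Nat.choose (2*n-1) (2*k-1) : ℚ) * ((-1)^k * tangentNumber k)
      = ((-1)^n * (2*n-1).factorial) * f (2*(n-k), 2*k-1) := by
    intro k hk
    simp only [Finset.mem_Icc] at hk
    have hch : (Nat.choose (2*n-1) (2*k-1) : ℚ) * (2*k-1).factorial * (2*(n-k)).factorial
        = (2*n-1).factorial := by
      have h := Nat.choose_mul_factorial_mul_factorial (show 2*k-1 ≤ 2*n-1 by omega)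
      have he : 2*n-1 - (2*k-1) = 2*(n-k) := by omega
      rw [he] at h
      exact_mod_cast congrArg (fun m : ℕ => (m : ℚ)) h
    have hsign : ((-1:ℚ))^(n-k) * (-1)^k = (-1)^n := by
      rw [← pow_add]; congr 1; omega
    have h4 : ((-1:ℚ))^k * (-1)^k = 1 := by
      rw [← pow_add]; exact Even.neg_one_pow ⟨k, rfl⟩
    have hnn : ((-1:ℚ))^n * (-1)^n = 1 := by
      rw [← pow_add]; exact Even.neg_one_pow ⟨n, rfl⟩
    have hrw : ((-1:ℚ))^(n-k) = (-1)^n * (-1)^k := by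
      calc ((-1:ℚ))^(n-k) = (-1)^(n-k) * ((-1)^k * (-1)^k) := by rw [h4, mul_one]
        _ = (-1)^n * (-1)^k := by rw [← mul_assoc, hsign]
    simp only [hf, coeff_cos_even', coeff_tan_odd', hrw]
    have hf1 : ((2*(n-k)).factorial : ℚ) ≠ 0 := by
      exact_mod_cast (Nat.factorial_ne_zero _)
    have hf2 : ((2*k-1).factorial : ℚ) ≠ 0 := by
      exact_mod_cast (Nat.factorial_ne_zero _)
    field_simp
    linear_combination (tangentNumber k) * hch -
      (((2*n-1).factorial : ℚ) * tangentNumber k) * hnn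
  rw [Finset.sum_congr rfl h3, ← Finset.mul_sum, ← h2, ← hsin, hsinval]
  have hF : ((2*n-1).factorial : ℚ) ≠ 0 := by
    exact_mod_cast (Nat.factorial_ne_zero _)
  have hodd : Odd (n + (n-1)) := by
    rw [Nat.odd_iff]; omega
  field_simp
  have h5 : ((-1:ℚ))^n * (-1)^(n-1) = -1 := by
    rw [← pow_add]; exact hodd.neg_one_pow
  linear_combination h5

lemma tangentNumber_one' : tangentNumber 1 = 1 := by
  have h := key_tangent_sum 1 le_rfl
  simp [Finset.Icc_self] at h
  linarith

/- For `n ≥ 2`, with `s k = (-1)^k T_k` (the constant value of the `2k`-cycle sum),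
`∑_{k=2}^n C(2n-1, 2k-1) s k = 2n - 2`. -/
theorem sum_choose_mul_s_eq (n : ℕ) (hn : 2 ≤ n) :
    ∑ k ∈ Icc 2 n, (Nat.choose (2 * n - 1) (2 * k - 1) : ℚ) *
        ((-1) ^ k * tangentNumber k) =
      2 * n - 2 := by
  have h := key_tangent_sum n (by omega)
  have hins : Icc 1 n = insert 1 (Icc 2 n) := by
    ext x; simp only [Finset.mem_Icc, Finset.mem_insert]; omega
  rw [hins, Finset.sum_insert (by simp)] at h
  have hc : ((2*n-1 : ℕ) : ℚ) = 2*n - 1 := by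
    rw [Nat.cast_sub (by omega)]; push_cast; ring
  have h1 : (Nat.choose (2*n-1) (2*1-1) : ℚ) * ((-1)^1 * tangentNumber 1)
      = -(2*(n:ℚ) - 1) := by
    rw [tangentNumber_one']
    norm_num [Nat.choose_one_right, hc]
  rw [h1] at h
  linarith
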